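/- The n-step Z-marginal kernel of the block Gibbs sampler satisfies K_Z^n(z, dz') = ∫ Π_{Z|XY}(dz'|x',y') Π_{Y|XZ}(dy'|x',z'') (ν_z K*^{(n−1)})(dy'', dz'', dx'), where ν_z is the distribution placing Z = z with probability one and X ~ Π_{X|Z}(·|z). -/

import Mathlib

open MeasureTheory ProbabilityTheory

noncomputable def tvDist {E : Type*} [MeasurableSpace E] (μ ν : Measure E) : ℝ :=
  ⨆ A : {A : Set E // MeasurableSet A}, |(μ A.1).toReal - (ν A.1).toReal|

noncomputable def kpow {E : Type*} [MeasurableSpace E] (P : Kernel E E) : ℕ → Kernel E E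
  | 0 => Kernel.id
  | n + 1 => (kpow P n) ∘ₖ P

lemma aux_bind_map {α β γ : Type*} [MeasurableSpace α] [MeasurableSpace β] [MeasurableSpace γ]
    (μ : Measure α) {g : α → β} (hg : Measurable g) {f : β → Measure γ} (hf : Measurable f) :
    (μ.map g).bind f = μ.bind fun a => f (g a) := by
  rw [Measure.bind, Measure.bind, Measure.map_map hf hg]; rfl

lemma aux_meas_map {α β γ : Type*} [MeasurableSpace α] [MeasurableSpace β] [MeasurableSpace γ]
    (κ : Kernel α β) [IsSFiniteKernel κ] {g : α → β → γ}
    (hg : Measurable fun q : α × β => g q.1 q.2) :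
    Measurable fun a => (κ a).map (g a) := by
  apply Measure.measurable_of_measurable_coe
  intro s hs
  have hga : ∀ a, Measurable (g a) := fun a => hg.comp measurable_prodMk_left
  simp_rw [Measure.map_apply (hga _) hs]
  have ht : MeasurableSet {q : α × β | g q.1 q.2 ∈ s} := hg hs
  have h : ∀ a, g a ⁻¹' s = Prod.mk a ⁻¹' {q : α × β | g q.1 q.2 ∈ s} := fun a => rfl
  simp_rw [h]
  exact Kernel.measurable_kernel_prodMk_left ht

lemma aux_meas_bind {α β γ : Type*} [MeasurableSpace α] [MeasurableSpace β] [MeasurableSpace γ]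
    (κ : Kernel α β) [IsSFiniteKernel κ] {f : α → β → Measure γ}
    (hf : Measurable fun q : α × β => f q.1 q.2) :
    Measurable fun a => (κ a).bind (f a) := by
  apply Measure.measurable_of_measurable_coe
  intro s hs
  have h : ∀ a, (κ a).bind (f a) s = ∫⁻ b, f a b s ∂ κ a :=
    fun a => Measure.bind_apply hs (hf.comp measurable_prodMk_left).aemeasurable
  simp_rw [h]
  exact Measurable.lintegral_kernel_prod_right ((Measure.measurable_coe hs).comp hf)

/-- Representation of the n-step Z-marginal block Gibbs kernel in terms of the
out-of-order kernel started from ν_z. -/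
theorem KZ_pow_eq
    {X Y Z : Type*} [MeasurableSpace X] [MeasurableSpace Y] [MeasurableSpace Z]
    (Pi : Measure (X × Y × Z)) [IsProbabilityMeasure Pi]
    (PXgZ : Kernel Z X) [IsMarkovKernel PXgZ]
    (PYgXZ : Kernel (X × Z) Y) [IsMarkovKernel PYgXZ]
    (PZgXY : Kernel (X × Y) Z) [IsMarkovKernel PZgXY]
    (PXYgZ : Kernel Z (X × Y)) [IsMarkovKernel PXYgZ]
    (hseq : ∀ z : Z, PXYgZ z = (PXgZ z).bind fun x => (PYgXZ (x, z)).map fun y => (x, y))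
    (KZ : Kernel Z Z)
    (hKZ : ∀ z : Z, KZ z = (PXYgZ z).bind fun q => PZgXY q)
    (Kstar : Kernel (Y × Z × X) (Y × Z × X))
    (hKstar : ∀ p : Y × Z × X, Kstar p =
      (PYgXZ (p.2.2, p.2.1)).bind fun y' =>
        (PZgXY (p.2.2, y')).bind fun z' =>
          (PXgZ z').map fun x' => (y', z', x'))
    :
    ∀ (z : Z) (y₀ : Y) (n : ℕ), 1 ≤ n →
      (kpow KZ n) z =
        ((((PXgZ z).map fun x => (y₀, z, x)).bind fun u => (kpow Kstar (n - 1)) u).bind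
          fun p => (PYgXZ (p.2.2, p.2.1)).bind fun y' => PZgXY (p.2.2, y')) := by
  -- the final "refresh" map
  set F : Y × Z × X → Measure Z :=
    fun p => (PYgXZ (p.2.2, p.2.1)).bind fun y' => PZgXY (p.2.2, y') with hF
  -- measurability of F
  have hFm : Measurable F := by
    have := aux_meas_bind (γ := Z)
      (PYgXZ.comap (fun u : Y × Z × X => (u.2.2, u.2.1)) (by fun_prop))
      (f := fun u y' => PZgXY (u.2.2, y'))
      (PZgXY.measurable.comp (by fun_prop))
    simpa only [Kernel.comap_apply] using this
  -- KZ z' in expanded form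
  have hKZ' : ∀ z' : Z, KZ z' =
      (PXgZ z').bind fun x' => (PYgXZ (x', z')).bind fun y'' => PZgXY (x', y'') := by
    intro z'
    have hm1 : Measurable fun x' : X => (PYgXZ (x', z')).map fun y => (x', y) := by
      have := aux_meas_map (γ := X × Y)
        (PYgXZ.comap (fun x' : X => (x', z')) (by fun_prop))
        (g := fun x' y => (x', y)) (by fun_prop)
      simpa only [Kernel.comap_apply] using this
    rw [hKZ, hseq, Measure.bind_bind hm1.aemeasurable PZgXY.measurable.aemeasurable]
    congr 1
    funext x'
    rw [aux_bind_map _ (by fun_prop) PZgXY.measurable]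
  -- one-step intertwining
  have hstep : ∀ p : Y × Z × X, (Kstar p).bind F = (F p).bind fun z' => KZ z' := by
    rintro ⟨y, zz, x⟩
    have hg1 : Measurable fun y' : Y =>
        (PZgXY (x, y')).bind fun z' => (PXgZ z').map fun x' : X => (y', z', x') := by
      have hmapm : Measurable fun q : Y × Z =>
          (PXgZ q.2).map fun x' : X => (q.1, q.2, x') := by
        have := aux_meas_map (γ := Y × Z × X)
          (PXgZ.comap (Prod.snd : Y × Z → Z) measurable_snd)
          (g := fun q x' => (q.1, q.2, x')) (by fun_prop)
        simpa only [Kernel.comap_apply] using this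
      have := aux_meas_bind (γ := Y × Z × X)
        (PZgXY.comap (fun y' : Y => (x, y')) measurable_prodMk_left)
        (f := fun y' z' => (PXgZ z').map fun x' : X => (y', z', x')) hmapm
      simpa only [Kernel.comap_apply] using this
    rw [hKstar]
    simp only
    rw [Measure.bind_bind hg1.aemeasurable hFm.aemeasurable]
    have hinner : ∀ y' : Y,
        ((PZgXY (x, y')).bind fun z' => (PXgZ z').map fun x' : X => (y', z', x')).bind F
          = (PZgXY (x, y')).bind fun z' => KZ z' := by
      intro y'
      have hm2 : Measurable fun z' : Z => (PXgZ z').map fun x' : X => (y', z', x') := by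
        have := aux_meas_map (γ := Y × Z × X) PXgZ
          (g := fun z' x' => (y', z', x')) (by fun_prop)
        exact this
      rw [Measure.bind_bind hm2.aemeasurable hFm.aemeasurable]
      congr 1
      funext z'
      rw [aux_bind_map _ (by fun_prop) hFm, hKZ' z']
    simp_rw [hinner]
    have hFp : F (y, zz, x) = (PYgXZ (x, zz)).bind fun y' => PZgXY (x, y') := rfl
    rw [hFp]
    exact (Measure.bind_bind (m := PYgXZ (x, zz)) (f := fun y' => PZgXY (x, y'))
      (g := fun z' => KZ z') (PZgXY.measurable.comp measurable_prodMk_left).aemeasurable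
      KZ.measurable.aemeasurable).symm
  -- n-step intertwining
  have hpow : ∀ (m : ℕ) (p : Y × Z × X),
      ((kpow Kstar m) p).bind F = (F p).bind fun z' => (kpow KZ m) z' := by
    intro m
    induction m with
    | zero =>
      intro p
      simp only [kpow, Kernel.id_apply]
      rw [Measure.dirac_bind hFm]
      exact (Measure.bind_dirac).symm
    | succ m ih =>
      intro p
      simp only [kpow]
      rw [Kernel.comp_apply, Measure.bind_bind (kpow Kstar m).measurable.aemeasurable hFm.aemeasurable]
      simp_rw [ih]
      rw [← Measure.bind_bind hFm.aemeasurable (kpow KZ m).measurable.aemeasurable, hstep p,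
        Measure.bind_bind KZ.measurable.aemeasurable (kpow KZ m).measurable.aemeasurable]
      congr 1
  -- assemble
  intro z y₀ n hn
  obtain ⟨m, rfl⟩ : ∃ m, n = m + 1 := ⟨n - 1, (Nat.succ_pred_eq_of_pos hn).symm⟩
  simp only [Nat.add_sub_cancel]
  rw [Measure.bind_bind (kpow Kstar m).measurable.aemeasurable hFm.aemeasurable]
  simp_rw [hpow m]
  rw [← Measure.bind_bind hFm.aemeasurable (kpow KZ m).measurable.aemeasurable]
  have hbase : ((PXgZ z).map fun x => ((y₀, z, x) : Y × Z × X)).bind F = KZ z := by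
    rw [aux_bind_map _ (by fun_prop) hFm, hKZ' z]
  rw [hbase]
  simp only [kpow]
  rw [Kernel.comp_apply]
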